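/- arXiv:2112.12708 — 2 statements merged into one kernel-verified Lean document; each statement's English description precedes it below -/
import Mathlib

section
/- Let A be a special Frobenius algebra in a monoidal category (i.e., a Frobenius algebra with μ ∘ Δ = id_A), let M be a right A-module with action ρ̄ : M ⊗ A → M, and let N be a left A-module with action ρ : A ⊗ N → N. Then the morphism P := (ρ̄ ⊗ ρ) ∘ (id_M ⊗ (Δ ∘ η) ⊗ id_N) : M ⊗ N → M ⊗ N is an idempotent, P ∘ P = P. -/
open CategoryTheory MonoidalCategory

set_option maxHeartbeats 1000000 in
private lemma frob_key {C : Type*} [Category C] [MonoidalCategory C] {A : C}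
    (μ : A ⊗ A ⟶ A) (η : 𝟙_ C ⟶ A) (Δ : A ⟶ A ⊗ A)
    (unit_right : (A ◁ η) ≫ μ = (ρ_ A).hom)
    (frob₁ : (A ◁ Δ) ≫ (α_ A A A).inv ≫ (μ ▷ A) = μ ≫ Δ)
    (frob₂ : (Δ ▷ A) ≫ (α_ A A A).hom ≫ (A ◁ μ) = μ ≫ Δ)
    (special : Δ ≫ μ = 𝟙 A) :
    (η ≫ Δ) ≫ (A ◁ ((λ_ A).inv ≫ ((η ≫ Δ) ▷ A) ≫ (α_ A A A).hom)) ≫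
      (α_ A A (A ⊗ A)).inv ≫ (μ ▷ (A ⊗ A)) ≫ (A ◁ μ) = η ≫ Δ := by
  calc (η ≫ Δ) ≫ (A ◁ ((λ_ A).inv ≫ ((η ≫ Δ) ▷ A) ≫ (α_ A A A).hom)) ≫
      (α_ A A (A ⊗ A)).inv ≫ (μ ▷ (A ⊗ A)) ≫ (A ◁ μ)
      = (η ≫ Δ) ≫ (A ◁ ((λ_ A).inv ≫ (η ▷ A))) ≫ (α_ A A A).inv ≫
          (((A ◁ Δ) ≫ (α_ A A A).inv ≫ (μ ▷ A)) ▷ A) ≫ (α_ A A A).hom ≫ (A ◁ μ) := by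
        monoidal
    _ = (η ≫ Δ) ≫ (A ◁ ((λ_ A).inv ≫ (η ▷ A))) ≫ (α_ A A A).inv ≫
          ((μ ≫ Δ) ▷ A) ≫ (α_ A A A).hom ≫ (A ◁ μ) := by rw [frob₁]
    _ = (η ≫ Δ) ≫ (((ρ_ A).inv ≫ ((A ◁ η) ≫ μ) ≫ Δ) ▷ A) ≫ (α_ A A A).hom ≫ (A ◁ μ) := by
        monoidal
    _ = (η ≫ Δ) ≫ (Δ ▷ A) ≫ (α_ A A A).hom ≫ (A ◁ μ) := by
        rw [unit_right, Iso.inv_hom_id_assoc]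
    _ = (η ≫ Δ) ≫ μ ≫ Δ := by rw [← frob₂]
    _ = η ≫ (Δ ≫ μ) ≫ Δ := by simp
    _ = η ≫ Δ := by rw [special, Category.id_comp]

set_option maxHeartbeats 2000000 in
/-- For a special Frobenius algebra `A` in a monoidal category, a right `A`-module
`(M, ρ̄)` and a left `A`-module `(N, ρ)`, the morphism
`P = (ρ̄ ⊗ ρ) ∘ (id_M ⊗ (Δ ∘ η) ⊗ id_N) : M ⊗ N ⟶ M ⊗ N` is an idempotent. -/
theorem tensor_over_special_frobenius_idempotent
    {C : Type*} [Category C] [MonoidalCategory C] {A M N : C}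
    (μ : A ⊗ A ⟶ A) (η : 𝟙_ C ⟶ A) (Δ : A ⟶ A ⊗ A) (ε : A ⟶ 𝟙_ C)
    (assoc : (α_ A A A).hom ≫ (𝟙 A ⊗ₘ μ) ≫ μ = (μ ⊗ₘ 𝟙 A) ≫ μ)
    (unit_left : (η ⊗ₘ 𝟙 A) ≫ μ = (λ_ A).hom)
    (unit_right : (𝟙 A ⊗ₘ η) ≫ μ = (ρ_ A).hom)
    (coassoc : Δ ≫ (𝟙 A ⊗ₘ Δ) = Δ ≫ (Δ ⊗ₘ 𝟙 A) ≫ (α_ A A A).hom)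
    (counit_left : Δ ≫ (ε ⊗ₘ 𝟙 A) = (λ_ A).inv)
    (counit_right : Δ ≫ (𝟙 A ⊗ₘ ε) = (ρ_ A).inv)
    (frob₁ : (𝟙 A ⊗ₘ Δ) ≫ (α_ A A A).inv ≫ (μ ⊗ₘ 𝟙 A) = μ ≫ Δ)
    (frob₂ : (Δ ⊗ₘ 𝟙 A) ≫ (α_ A A A).hom ≫ (𝟙 A ⊗ₘ μ) = μ ≫ Δ)
    (special : Δ ≫ μ = 𝟙 A)
    (ρM : M ⊗ A ⟶ M)
    (ρM_assoc : (α_ M A A).hom ≫ (𝟙 M ⊗ₘ μ) ≫ ρM = (ρM ⊗ₘ 𝟙 A) ≫ ρM)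
    (ρM_unit : (𝟙 M ⊗ₘ η) ≫ ρM = (ρ_ M).hom)
    (ρN : A ⊗ N ⟶ N)
    (ρN_assoc : (α_ A A N).hom ≫ (𝟙 A ⊗ₘ ρN) ≫ ρN = (μ ⊗ₘ 𝟙 N) ≫ ρN)
    (ρN_unit : (η ⊗ₘ 𝟙 N) ≫ ρN = (λ_ N).hom)
    (P : M ⊗ N ⟶ M ⊗ N)
    (hP : P = (𝟙 M ⊗ₘ (λ_ N).inv) ≫ (𝟙 M ⊗ₘ ((η ≫ Δ) ⊗ₘ 𝟙 N)) ≫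
        (𝟙 M ⊗ₘ (α_ A A N).hom) ≫ (α_ M A (A ⊗ N)).inv ≫ (ρM ⊗ₘ ρN)) :
    P ≫ P = P := by
  simp only [id_tensorHom, tensorHom_id] at hP ρM_assoc ρN_assoc ρM_unit ρN_unit frob₁ frob₂ unit_left unit_right
  rw [tensorHom_def ρM ρN] at hP
  -- abbreviate the N-side insertion
  obtain ⟨s, hs⟩ : ∃ t : N ⟶ A ⊗ (A ⊗ N),
      t = (λ_ N).inv ≫ ((η ≫ Δ) ▷ N) ≫ (α_ A A N).hom := ⟨_, rfl⟩
  have hP' : P = M ◁ s ≫ (α_ M A (A ⊗ N)).inv ≫ ρM ▷ (A ⊗ N) ≫ M ◁ ρN := by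
    rw [hP, hs]; simp [MonoidalCategory.whiskerLeft_comp]
  rw [hP']
  -- interchange: exchange a whiskered morphism past ρM
  have step1 : ∀ t : N ⟶ A ⊗ (A ⊗ N),
      (M ◁ t ≫ (α_ M A (A ⊗ N)).inv ≫ ρM ▷ (A ⊗ N) ≫ M ◁ ρN) ≫
        (M ◁ t ≫ (α_ M A (A ⊗ N)).inv ≫ ρM ▷ (A ⊗ N) ≫ M ◁ ρN)
      = M ◁ (t ≫ A ◁ (ρN ≫ t)) ≫ (α_ M A (A ⊗ (A ⊗ N))).inv ≫
          ρM ▷ (A ⊗ (A ⊗ N)) ≫ (α_ M A (A ⊗ N)).inv ≫ ρM ▷ (A ⊗ N) ≫ M ◁ ρN := by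
    intro t
    calc (M ◁ t ≫ (α_ M A (A ⊗ N)).inv ≫ ρM ▷ (A ⊗ N) ≫ M ◁ ρN) ≫
          (M ◁ t ≫ (α_ M A (A ⊗ N)).inv ≫ ρM ▷ (A ⊗ N) ≫ M ◁ ρN)
        = M ◁ t ≫ (α_ M A (A ⊗ N)).inv ≫ (ρM ▷ (A ⊗ N) ≫ M ◁ (ρN ≫ t)) ≫
            (α_ M A (A ⊗ N)).inv ≫ ρM ▷ (A ⊗ N) ≫ M ◁ ρN := by
          simp only [MonoidalCategory.whiskerLeft_comp, Category.assoc]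
      _ = M ◁ t ≫ (α_ M A (A ⊗ N)).inv ≫ ((M ⊗ A) ◁ (ρN ≫ t) ≫ ρM ▷ (A ⊗ (A ⊗ N))) ≫
            (α_ M A (A ⊗ N)).inv ≫ ρM ▷ (A ⊗ N) ≫ M ◁ ρN := by
          rw [← whisker_exchange]
      _ = M ◁ (t ≫ A ◁ (ρN ≫ t)) ≫ (α_ M A (A ⊗ (A ⊗ N))).inv ≫
            ρM ▷ (A ⊗ (A ⊗ N)) ≫ (α_ M A (A ⊗ N)).inv ≫ ρM ▷ (A ⊗ N) ≫ M ◁ ρN := by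
          monoidal
  -- merge the two ρM actions via ρM_assoc
  have step2 :
      (α_ M A (A ⊗ (A ⊗ N))).inv ≫ ρM ▷ (A ⊗ (A ⊗ N)) ≫
          (α_ M A (A ⊗ N)).inv ≫ ρM ▷ (A ⊗ N)
      = M ◁ ((α_ A A (A ⊗ N)).inv ≫ μ ▷ (A ⊗ N)) ≫
          (α_ M A (A ⊗ N)).inv ≫ ρM ▷ (A ⊗ N) := by
    calc (α_ M A (A ⊗ (A ⊗ N))).inv ≫ ρM ▷ (A ⊗ (A ⊗ N)) ≫
          (α_ M A (A ⊗ N)).inv ≫ ρM ▷ (A ⊗ N)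
        = (α_ M A (A ⊗ (A ⊗ N))).inv ≫ (α_ (M ⊗ A) A (A ⊗ N)).inv ≫
            ((ρM ▷ A ≫ ρM) ▷ (A ⊗ N)) := by monoidal
      _ = (α_ M A (A ⊗ (A ⊗ N))).inv ≫ (α_ (M ⊗ A) A (A ⊗ N)).inv ≫
            (((α_ M A A).hom ≫ M ◁ μ ≫ ρM) ▷ (A ⊗ N)) := by rw [← ρM_assoc]
      _ = M ◁ ((α_ A A (A ⊗ N)).inv ≫ μ ▷ (A ⊗ N)) ≫
            (α_ M A (A ⊗ N)).inv ≫ ρM ▷ (A ⊗ N) := by monoidal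
  rw [step1, reassoc_of% step2]
  -- factor out the last ρN
  have factor : ∀ g : N ⟶ A ⊗ (A ⊗ N),
      M ◁ g ≫ (α_ M A (A ⊗ N)).inv ≫ ρM ▷ (A ⊗ N) ≫ M ◁ ρN
      = M ◁ (g ≫ A ◁ ρN) ≫ (α_ M A N).inv ≫ ρM ▷ N := by
    intro g
    rw [← whisker_exchange]
    monoidal
  -- exchange ρN past the inserted η ≫ Δ
  have hex : ρN ≫ s = (λ_ (A ⊗ N)).inv ≫ ((η ≫ Δ) ▷ (A ⊗ N)) ≫
      (α_ A A (A ⊗ N)).hom ≫ A ◁ (A ◁ ρN) := by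
    rw [hs]
    calc ρN ≫ (λ_ N).inv ≫ (η ≫ Δ) ▷ N ≫ (α_ A A N).hom
        = (λ_ (A ⊗ N)).inv ≫ (𝟙_ C ◁ ρN ≫ (η ≫ Δ) ▷ N) ≫ (α_ A A N).hom := by monoidal
      _ = (λ_ (A ⊗ N)).inv ≫ ((η ≫ Δ) ▷ (A ⊗ N) ≫ (A ⊗ A) ◁ ρN) ≫ (α_ A A N).hom := by
          rw [whisker_exchange]
      _ = (λ_ (A ⊗ N)).inv ≫ ((η ≫ Δ) ▷ (A ⊗ N)) ≫ (α_ A A (A ⊗ N)).hom ≫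
            A ◁ (A ◁ ρN) := by monoidal
  -- the N-side identity
  have hρN2 : A ◁ (α_ A A N).hom ≫ A ◁ (A ◁ ρN) ≫ A ◁ ρN = A ◁ (μ ▷ N) ≫ A ◁ ρN := by
    simp only [← MonoidalCategory.whiskerLeft_comp]
    rw [ρN_assoc]
  have nside : (s ≫ A ◁ (ρN ≫ s) ≫ (α_ A A (A ⊗ N)).inv ≫ μ ▷ (A ⊗ N)) ≫ A ◁ ρN
      = s ≫ A ◁ ρN := by
    rw [hex, hs]
    simp only [Category.assoc]
    calc (λ_ N).inv ≫ (η ≫ Δ) ▷ N ≫ (α_ A A N).hom ≫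
          A ◁ ((λ_ (A ⊗ N)).inv ≫ (η ≫ Δ) ▷ (A ⊗ N) ≫ (α_ A A (A ⊗ N)).hom ≫
            A ◁ (A ◁ ρN)) ≫ (α_ A A (A ⊗ N)).inv ≫ μ ▷ (A ⊗ N) ≫ A ◁ ρN
        = (λ_ N).inv ≫ (η ≫ Δ) ▷ N ≫ (α_ A A N).hom ≫
            A ◁ ((λ_ (A ⊗ N)).inv ≫ (η ≫ Δ) ▷ (A ⊗ N) ≫ (α_ A A (A ⊗ N)).hom) ≫
            (α_ A A (A ⊗ (A ⊗ N))).inv ≫ ((A ⊗ A) ◁ (A ◁ ρN) ≫ μ ▷ (A ⊗ N)) ≫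
            A ◁ ρN := by monoidal
      _ = (λ_ N).inv ≫ (η ≫ Δ) ▷ N ≫ (α_ A A N).hom ≫
            A ◁ ((λ_ (A ⊗ N)).inv ≫ (η ≫ Δ) ▷ (A ⊗ N) ≫ (α_ A A (A ⊗ N)).hom) ≫
            (α_ A A (A ⊗ (A ⊗ N))).inv ≫ (μ ▷ (A ⊗ (A ⊗ N)) ≫ A ◁ (A ◁ ρN)) ≫
            A ◁ ρN := by rw [whisker_exchange]
      _ = (λ_ N).inv ≫
            (((η ≫ Δ) ≫ A ◁ ((λ_ A).inv ≫ ((η ≫ Δ) ▷ A) ≫ (α_ A A A).hom) ≫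
              (α_ A A (A ⊗ A)).inv ≫ μ ▷ (A ⊗ A)) ▷ N) ≫
            (α_ A (A ⊗ A) N).hom ≫ A ◁ (α_ A A N).hom ≫ A ◁ (A ◁ ρN) ≫ A ◁ ρN := by
          monoidal
      _ = (λ_ N).inv ≫
            (((η ≫ Δ) ≫ A ◁ ((λ_ A).inv ≫ ((η ≫ Δ) ▷ A) ≫ (α_ A A A).hom) ≫
              (α_ A A (A ⊗ A)).inv ≫ μ ▷ (A ⊗ A)) ▷ N) ≫
            (α_ A (A ⊗ A) N).hom ≫ A ◁ (μ ▷ N) ≫ A ◁ ρN := by rw [hρN2]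
      _ = (λ_ N).inv ≫
            (((η ≫ Δ) ≫ A ◁ ((λ_ A).inv ≫ ((η ≫ Δ) ▷ A) ≫ (α_ A A A).hom) ≫
              (α_ A A (A ⊗ A)).inv ≫ μ ▷ (A ⊗ A) ≫ A ◁ μ) ▷ N) ≫
            (α_ A A N).hom ≫ A ◁ ρN := by monoidal
      _ = (λ_ N).inv ≫ ((η ≫ Δ) ▷ N) ≫ (α_ A A N).hom ≫ A ◁ ρN := by
          rw [frob_key μ η Δ unit_right frob₁ frob₂ special]
  calc M ◁ (s ≫ A ◁ (ρN ≫ s)) ≫ M ◁ ((α_ A A (A ⊗ N)).inv ≫ μ ▷ (A ⊗ N)) ≫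
        (α_ M A (A ⊗ N)).inv ≫ ρM ▷ (A ⊗ N) ≫ M ◁ ρN
      = M ◁ (s ≫ A ◁ (ρN ≫ s) ≫ (α_ A A (A ⊗ N)).inv ≫ μ ▷ (A ⊗ N)) ≫
          (α_ M A (A ⊗ N)).inv ≫ ρM ▷ (A ⊗ N) ≫ M ◁ ρN := by
        simp only [MonoidalCategory.whiskerLeft_comp, Category.assoc]
    _ = M ◁ ((s ≫ A ◁ (ρN ≫ s) ≫ (α_ A A (A ⊗ N)).inv ≫ μ ▷ (A ⊗ N)) ≫ A ◁ ρN) ≫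
          (α_ M A N).inv ≫ ρM ▷ N := by rw [factor]
    _ = M ◁ (s ≫ A ◁ ρN) ≫ (α_ M A N).inv ≫ ρM ▷ N := by rw [nside]
    _ = M ◁ s ≫ (α_ M A (A ⊗ N)).inv ≫ ρM ▷ (A ⊗ N) ≫ M ◁ ρN := by rw [← factor]
end

section
/- Let C be a monoidal category, A an algebra in C, (M, ρ̄) a right A-module and (N, ρ) a left A-module. If A is special Frobenius, then the idempotent P = (ρ̄ ⊗ ρ) ∘ (id_M ⊗ (Δ ∘ η) ⊗ id_N) on M ⊗ N coequalizes the two action morphisms: P ∘ (ρ̄ ⊗ id_N) = P ∘ (id_M ⊗ ρ) as morphisms M ⊗ A ⊗ N → M ⊗ N. -/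
open CategoryTheory MonoidalCategory

/-- For a special Frobenius algebra `A`, a right `A`-module `(M, ρ̄)` and a left
`A`-module `(N, ρ)`, the idempotent `P = (ρ̄ ⊗ ρ) ∘ (id_M ⊗ (Δ ∘ η) ⊗ id_N)` on
`M ⊗ N` coequalizes the two action morphisms:
`P ∘ (ρ̄ ⊗ id_N) = P ∘ (id_M ⊗ ρ)` as morphisms `M ⊗ A ⊗ N ⟶ M ⊗ N`. -/
theorem special_frobenius_idempotent_coequalizes
    {C : Type*} [Category C] [MonoidalCategory C] {A M N : C}
    (μ : A ⊗ A ⟶ A) (η : 𝟙_ C ⟶ A) (Δ : A ⟶ A ⊗ A) (ε : A ⟶ 𝟙_ C)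
    (assoc : (α_ A A A).hom ≫ (𝟙 A ⊗ₘ μ) ≫ μ = (μ ⊗ₘ 𝟙 A) ≫ μ)
    (unit_left : (η ⊗ₘ 𝟙 A) ≫ μ = (λ_ A).hom)
    (unit_right : (𝟙 A ⊗ₘ η) ≫ μ = (ρ_ A).hom)
    (coassoc : Δ ≫ (𝟙 A ⊗ₘ Δ) = Δ ≫ (Δ ⊗ₘ 𝟙 A) ≫ (α_ A A A).hom)
    (counit_left : Δ ≫ (ε ⊗ₘ 𝟙 A) = (λ_ A).inv)
    (counit_right : Δ ≫ (𝟙 A ⊗ₘ ε) = (ρ_ A).inv)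
    (frob₁ : (𝟙 A ⊗ₘ Δ) ≫ (α_ A A A).inv ≫ (μ ⊗ₘ 𝟙 A) = μ ≫ Δ)
    (frob₂ : (Δ ⊗ₘ 𝟙 A) ≫ (α_ A A A).hom ≫ (𝟙 A ⊗ₘ μ) = μ ≫ Δ)
    (special : Δ ≫ μ = 𝟙 A)
    (ρM : M ⊗ A ⟶ M)
    (ρM_assoc : (α_ M A A).hom ≫ (𝟙 M ⊗ₘ μ) ≫ ρM = (ρM ⊗ₘ 𝟙 A) ≫ ρM)
    (ρM_unit : (𝟙 M ⊗ₘ η) ≫ ρM = (ρ_ M).hom)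
    (ρN : A ⊗ N ⟶ N)
    (ρN_assoc : (α_ A A N).hom ≫ (𝟙 A ⊗ₘ ρN) ≫ ρN = (μ ⊗ₘ 𝟙 N) ≫ ρN)
    (ρN_unit : (η ⊗ₘ 𝟙 N) ≫ ρN = (λ_ N).hom)
    (P : M ⊗ N ⟶ M ⊗ N)
    (hP : P = (𝟙 M ⊗ₘ (λ_ N).inv) ≫ (𝟙 M ⊗ₘ ((η ≫ Δ) ⊗ₘ 𝟙 N)) ≫
        (𝟙 M ⊗ₘ (α_ A A N).hom) ≫ (α_ M A (A ⊗ N)).inv ≫ (ρM ⊗ₘ ρN)) :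
    (ρM ⊗ₘ 𝟙 N) ≫ P = (α_ M A N).hom ≫ (𝟙 M ⊗ₘ ρN) ≫ P := by
  -- whiskered forms of the module axioms
  have ρM_assoc' : ρM ▷ A ≫ ρM = (α_ M A A).hom ≫ M ◁ μ ≫ ρM := by
    simpa only [id_tensorHom, tensorHom_id, Category.assoc] using ρM_assoc.symm
  have ρN_assoc' : A ◁ ρN ≫ ρN = (α_ A A N).inv ≫ μ ▷ N ≫ ρN := by
    rw [Iso.eq_inv_comp]
    simpa only [id_tensorHom, tensorHom_id, Category.assoc] using ρN_assoc
  -- key Frobenius consequences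
  have key₁ : (ρ_ A).inv ≫ (A ◁ (η ≫ Δ)) ≫ (α_ A A A).inv ≫ (μ ▷ A) = Δ := by
    have frob₁' : A ◁ Δ ≫ (α_ A A A).inv ≫ μ ▷ A = μ ≫ Δ := by
      simpa only [id_tensorHom, tensorHom_id, Category.assoc] using frob₁
    have unit_right' : A ◁ η ≫ μ = (ρ_ A).hom := by
      simpa only [id_tensorHom] using unit_right
    rw [MonoidalCategory.whiskerLeft_comp, Category.assoc, frob₁',
      ← Category.assoc, ← Category.assoc, Category.assoc (ρ_ A).inv, unit_right']
    simp
  have key₂ : (λ_ A).inv ≫ ((η ≫ Δ) ▷ A) ≫ (α_ A A A).hom ≫ (A ◁ μ) = Δ := by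
    have frob₂' : Δ ▷ A ≫ (α_ A A A).hom ≫ A ◁ μ = μ ≫ Δ := by
      simpa only [id_tensorHom, tensorHom_id, Category.assoc] using frob₂
    have unit_left' : η ▷ A ≫ μ = (λ_ A).hom := by
      simpa only [tensorHom_id] using unit_left
    rw [comp_whiskerRight, Category.assoc, frob₂',
      ← Category.assoc, ← Category.assoc, Category.assoc (λ_ A).inv, unit_left']
    simp
  -- the common form
  have hL :
      ρM ▷ N ≫ M ◁ (λ_ N).inv ≫ M ◁ ((η ≫ Δ) ▷ N) ≫ M ◁ (α_ A A N).hom ≫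
          (α_ M A (A ⊗ N)).inv ≫ ρM ▷ (A ⊗ N) ≫ M ◁ ρN
        = (α_ M A N).hom ≫ M ◁ (Δ ▷ N) ≫ M ◁ (α_ A A N).hom ≫
          (α_ M A (A ⊗ N)).inv ≫ ρM ▷ (A ⊗ N) ≫ M ◁ ρN := by
    rw [← MonoidalCategory.whiskerLeft_comp_assoc, ← MonoidalCategory.whiskerLeft_comp_assoc,
      ← whisker_exchange_assoc, associator_inv_naturality_left_assoc,
      ← comp_whiskerRight_assoc, ρM_assoc']
    conv_rhs => rw [← key₁]
    simp only [comp_whiskerRight, MonoidalCategory.whiskerLeft_comp, Category.assoc]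
    monoidal
  have reform : ∀ g : A ⊗ N ⟶ A ⊗ (A ⊗ N),
      (α_ M A N).hom ≫ M ◁ g ≫ (α_ M A (A ⊗ N)).inv ≫ ρM ▷ (A ⊗ N) ≫ M ◁ ρN
        = (α_ M A N).hom ≫ M ◁ (g ≫ A ◁ ρN) ≫ (α_ M A N).inv ≫ ρM ▷ N := by
    intro g
    rw [MonoidalCategory.whiskerLeft_comp, Category.assoc,
      associator_inv_naturality_right_assoc, whisker_exchange]
  have hInner :
      ρN ≫ (λ_ N).inv ≫ ((η ≫ Δ) ▷ N) ≫ (α_ A A N).hom ≫ A ◁ ρN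
        = Δ ▷ N ≫ (α_ A A N).hom ≫ A ◁ ρN := by
    rw [leftUnitor_inv_naturality_assoc, whisker_exchange_assoc,
      associator_naturality_right_assoc, ← MonoidalCategory.whiskerLeft_comp,
      ρN_assoc']
    conv_rhs => rw [← key₂]
    simp only [comp_whiskerRight, MonoidalCategory.whiskerLeft_comp, Category.assoc]
    monoidal
  have hR :
      (α_ M A N).hom ≫ M ◁ ρN ≫ M ◁ (λ_ N).inv ≫ M ◁ ((η ≫ Δ) ▷ N) ≫ M ◁ (α_ A A N).hom ≫
          (α_ M A (A ⊗ N)).inv ≫ ρM ▷ (A ⊗ N) ≫ M ◁ ρN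
        = (α_ M A N).hom ≫ M ◁ (Δ ▷ N) ≫ M ◁ (α_ A A N).hom ≫
          (α_ M A (A ⊗ N)).inv ≫ ρM ▷ (A ⊗ N) ≫ M ◁ ρN := by
    have h1 := reform (ρN ≫ (λ_ N).inv ≫ ((η ≫ Δ) ▷ N) ≫ (α_ A A N).hom)
    have h2 := reform (Δ ▷ N ≫ (α_ A A N).hom)
    simp only [MonoidalCategory.whiskerLeft_comp, Category.assoc] at h1 h2
    rw [h1, h2]
    simp only [← MonoidalCategory.whiskerLeft_comp_assoc, Category.assoc]
    rw [hInner]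
  calc (ρM ⊗ₘ 𝟙 N) ≫ P
      = ρM ▷ N ≫ M ◁ (λ_ N).inv ≫ M ◁ ((η ≫ Δ) ▷ N) ≫ M ◁ (α_ A A N).hom ≫
          (α_ M A (A ⊗ N)).inv ≫ ρM ▷ (A ⊗ N) ≫ M ◁ ρN := by
        simp only [hP, MonoidalCategory.tensorHom_def, id_tensorHom, tensorHom_id,
          MonoidalCategory.whiskerLeft_comp, MonoidalCategory.whiskerLeft_id,
          MonoidalCategory.id_whiskerRight, Category.id_comp, Category.comp_id,
          Category.assoc]
    _ = (α_ M A N).hom ≫ M ◁ ρN ≫ M ◁ (λ_ N).inv ≫ M ◁ ((η ≫ Δ) ▷ N) ≫ M ◁ (α_ A A N).hom ≫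
          (α_ M A (A ⊗ N)).inv ≫ ρM ▷ (A ⊗ N) ≫ M ◁ ρN := by rw [hL, hR]
    _ = (α_ M A N).hom ≫ (𝟙 M ⊗ₘ ρN) ≫ P := by
        simp only [hP, MonoidalCategory.tensorHom_def, id_tensorHom, tensorHom_id,
          MonoidalCategory.whiskerLeft_comp, MonoidalCategory.whiskerLeft_id,
          MonoidalCategory.id_whiskerRight, Category.id_comp, Category.comp_id,
          Category.assoc]
end
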